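/- Double robustness of standard G-estimation, treatment-free half: Let H : Ω → ℝ^d be measurable, A a treatment indicator, and Y an integrable random variable. Suppose there are Borel functions ν, C : ℝ^d → ℝ with ν(H) integrable, C bounded, and E[Y | σ(H,A)] = ν(H) + A·C(H) μ-a.e. Then for EVERY bounded Borel function p̃ : ℝ^d → ℝ (whether or not it equals the true propensity P(A=1 | σ(H))) and every bounded Borel λ : ℝ^d → ℝ, E[ λ(H)·(A − p̃(H))·(Y − A·C(H) − ν(H)) ] = 0. -/

import Mathlib

open MeasureTheory

/-- Double robustness of standard G-estimation, treatment-free half: with the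
correctly specified treatment-free model `θ(H) = -ν(H)`, the G-estimating
function is unbiased for every posited propensity model `p̃`. -/
theorem standard_G_estimation_doubly_robust_treatment_free
    {Ω : Type*} [MeasurableSpace Ω] (μ : Measure Ω) [IsProbabilityMeasure μ]
    {d : ℕ} (H : Ω → (Fin d → ℝ)) (hH : Measurable H)
    (A : Ω → ℝ) (hA : Measurable A) (hA01 : ∀ ω, A ω = 0 ∨ A ω = 1)
    (Y : Ω → ℝ) (hY : Integrable Y μ)
    (ν C : (Fin d → ℝ) → ℝ) (hν : Measurable ν) (hC : Measurable C)
    (hνint : Integrable (fun ω => ν (H ω)) μ)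
    (hCbdd : ∃ M, ∀ x, |C x| ≤ M)
    (hblip : μ[Y | MeasurableSpace.comap (fun ω => (H ω, A ω)) inferInstance]
      =ᵐ[μ] fun ω => ν (H ω) + A ω * C (H ω)) :
    ∀ ptilde lam : (Fin d → ℝ) → ℝ, Measurable ptilde → Measurable lam →
      (∃ M, ∀ x, |ptilde x| ≤ M) → (∃ M, ∀ x, |lam x| ≤ M) →
      ∫ ω, lam (H ω) * (A ω - ptilde (H ω)) * (Y ω - A ω * C (H ω) - ν (H ω)) ∂μ = 0 := by
  intro ptilde lam hpt hlam ⟨Mp, hMp⟩ ⟨Ml, hMl⟩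
  have hm := (hH.prodMk hA).comap_le
  set m : MeasurableSpace Ω := MeasurableSpace.comap (fun ω => (H ω, A ω)) inferInstance with hmdef
  haveI : SigmaFinite (μ.trim hm) := by
    have : IsFiniteMeasure (μ.trim hm) := isFiniteMeasure_trim hm
    infer_instance
  -- the pair map is measurable with respect to m
  have hpair : Measurable[m] (fun ω => (H ω, A ω)) := Measurable.of_comap_le le_rfl
  have hmf : Measurable[m] (fun ω => lam (H ω) * (A ω - ptilde (H ω))) := by
    have : Measurable (fun p : (Fin d → ℝ) × ℝ => lam p.1 * (p.2 - ptilde p.1)) :=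
      (hlam.comp measurable_fst).mul (measurable_snd.sub (hpt.comp measurable_fst))
    exact this.comp hpair
  have hmW : Measurable[m] (fun ω => ν (H ω) + A ω * C (H ω)) := by
    have : Measurable (fun p : (Fin d → ℝ) × ℝ => ν p.1 + p.2 * C p.1) :=
      (hν.comp measurable_fst).add (measurable_snd.mul (hC.comp measurable_fst))
    exact this.comp hpair
  obtain ⟨Mc, hMc⟩ := hCbdd
  have hAbd : ∀ ω, |A ω| ≤ 1 := by
    intro ω; rcases hA01 ω with h | h <;> simp [h]
  -- integrability of W := ν(H) + A*C(H)
  have hACint : Integrable (fun ω => A ω * C (H ω)) μ := by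
    refine Integrable.mono' (integrable_const Mc) ((hA.mul (hC.comp hH)).aestronglyMeasurable) ?_
    filter_upwards with ω
    calc ‖A ω * C (H ω)‖ = |A ω| * |C (H ω)| := abs_mul _ _
      _ ≤ 1 * Mc := by
          exact mul_le_mul (hAbd ω) (hMc _) (abs_nonneg _) zero_le_one
      _ = Mc := one_mul _
  have hWint : Integrable (fun ω => ν (H ω) + A ω * C (H ω)) μ := hνint.add hACint
  set Z : Ω → ℝ := fun ω => Y ω - (ν (H ω) + A ω * C (H ω)) with hZdef
  have hZint : Integrable Z μ := hY.sub hWint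
  -- conditional expectation of Z is 0
  have hcondZ : μ[Z | m] =ᵐ[μ] 0 := by
    have h1 : μ[Z | m] =ᵐ[μ] μ[Y | m] - μ[fun ω => ν (H ω) + A ω * C (H ω) | m] :=
      condExp_sub hY hWint m
    have h2 : μ[fun ω => ν (H ω) + A ω * C (H ω) | m]
        = fun ω => ν (H ω) + A ω * C (H ω) :=
      condExp_of_stronglyMeasurable hm hmW.stronglyMeasurable hWint
    filter_upwards [h1, hblip] with ω hω hblipω
    simp only [Pi.sub_apply, Pi.zero_apply] at *
    rw [hω, h2, hblipω]; ring
  -- integrand equals f * Z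
  have heq : (fun ω => lam (H ω) * (A ω - ptilde (H ω)) * (Y ω - A ω * C (H ω) - ν (H ω)))
      = fun ω => lam (H ω) * (A ω - ptilde (H ω)) * Z ω := by
    funext ω; simp only [hZdef]; ring
  rw [heq]
  have hfZint : Integrable (fun ω => lam (H ω) * (A ω - ptilde (H ω)) * Z ω) μ := by
    refine hZint.bdd_mul ((hmf.mono hm le_rfl).aestronglyMeasurable) (c := Ml * (1 + Mp)) (Filter.Eventually.of_forall ?_)
    intro ω
    have : ‖lam (H ω) * (A ω - ptilde (H ω))‖ = |lam (H ω)| * |A ω - ptilde (H ω)| :=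
      abs_mul _ _
    rw [this]
    refine mul_le_mul (hMl _) ?_ (abs_nonneg _) ((abs_nonneg (lam (H ω))).trans (hMl (H ω)))
    calc |A ω - ptilde (H ω)| ≤ |A ω| + |ptilde (H ω)| := abs_sub _ _
      _ ≤ 1 + Mp := add_le_add (hAbd ω) (hMp _)
  -- pull-out property and integrate
  have hpull : μ[fun ω => lam (H ω) * (A ω - ptilde (H ω)) * Z ω | m]
      =ᵐ[μ] fun ω => lam (H ω) * (A ω - ptilde (H ω)) * (μ[Z | m]) ω :=
    condExp_mul_of_stronglyMeasurable_left hmf.stronglyMeasurable hfZint hZint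
  calc ∫ ω, lam (H ω) * (A ω - ptilde (H ω)) * Z ω ∂μ
      = ∫ ω, (μ[fun ω => lam (H ω) * (A ω - ptilde (H ω)) * Z ω | m]) ω ∂μ :=
        (integral_condExp hm).symm
    _ = ∫ ω, lam (H ω) * (A ω - ptilde (H ω)) * (μ[Z | m]) ω ∂μ :=
        integral_congr_ae hpull
    _ = ∫ (_ : Ω), (0:ℝ) ∂μ := by
        refine integral_congr_ae ?_
        filter_upwards [hcondZ] with ω hω
        rw [hω]; simp
    _ = 0 := by simp
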